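/- Let N ∈ ℝ^{m×d} for some d ≥ 1. Then the unique pair (X, v) with X ∈ ℝ^{m×d} and v ∈ ℝ^{1×d} satisfying the linear system ½DX + av = ½DN and aᵀX − (1/λ)v = 0 is given by v = (λ/(1 + 2λs)) aᵀN and X = N − (2λ/(1 + 2λs)) D⁻¹aaᵀN. -/

import Mathlib

open Matrix

/-- Unique solution of the KKT stationarity system of the single-constraint collision
proximal problem. -/
theorem stmt_16
    (m : ℕ) (hm : 1 ≤ m)
    (dg : Fin m → ℝ) (hdg : ∀ i, 0 < dg i)
    (D : Matrix (Fin m) (Fin m) ℝ) (hD : D = Matrix.diagonal dg)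
    (a : Matrix (Fin m) (Fin 1) ℝ)
    (lam : ℝ) (hlam : lam ≠ 0)
    (s : ℝ) (hs : s = (aᵀ * D⁻¹ * a) 0 0)
    (hden : 1 + 2 * lam * s ≠ 0)
    (d : ℕ) (hd : 1 ≤ d)
    (N : Matrix (Fin m) (Fin d) ℝ) :
    ∀ (X : Matrix (Fin m) (Fin d) ℝ) (v : Matrix (Fin 1) (Fin d) ℝ),
      ((1 / 2 : ℝ) • (D * X) + a * v = (1 / 2 : ℝ) • (D * N) ∧
        aᵀ * X - (1 / lam) • v = 0) ↔
      (v = (lam / (1 + 2 * lam * s)) • (aᵀ * N) ∧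
        X = N - (2 * lam / (1 + 2 * lam * s)) • (D⁻¹ * a * aᵀ * N)) := by
  intro X v
  have hDdet : IsUnit D.det := by
    rw [hD, Matrix.det_diagonal]
    exact isUnit_iff_ne_zero.mpr
      (Finset.prod_ne_zero_iff.mpr fun i _ => (hdg i).ne')
  have hDi : D⁻¹ * D = 1 := Matrix.nonsing_inv_mul D hDdet
  have hDi' : D * D⁻¹ = 1 := Matrix.mul_nonsing_inv D hDdet
  have key : ∀ w : Matrix (Fin 1) (Fin d) ℝ, (aᵀ * D⁻¹ * a) * w = s • w := by
    intro w
    ext i j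
    have hi : i = 0 := Subsingleton.elim _ _
    subst hi
    rw [Matrix.mul_apply, Fin.sum_univ_one, Matrix.smul_apply, smul_eq_mul, hs]
  have key' : ∀ w : Matrix (Fin 1) (Fin d) ℝ, aᵀ * (D⁻¹ * (a * w)) = s • w := by
    intro w
    rw [← Matrix.mul_assoc, ← Matrix.mul_assoc]
    exact key w
  constructor
  · rintro ⟨h1, h2⟩
    have h2' : aᵀ * X = (1 / lam) • v := sub_eq_zero.mp h2
    have h1' : D * X = D * N - (2:ℝ) • (a * v) := by
      have h := congrArg (fun M => (2:ℝ) • M) h1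
      simp only [smul_add, smul_smul] at h
      norm_num at h
      linear_combination (norm := module) h
    have hX : X = N - (2:ℝ) • (D⁻¹ * (a * v)) := by
      have h := congrArg (fun M => D⁻¹ * M) h1'
      simp only [Matrix.mul_sub, Matrix.mul_smul, ← Matrix.mul_assoc, hDi,
        Matrix.one_mul] at h
      simpa [Matrix.mul_assoc] using h
    have hAX : aᵀ * X = aᵀ * N - (2 * s) • v := by
      rw [hX, Matrix.mul_sub, Matrix.mul_smul, key', smul_smul]
    have hv : v = (lam / (1 + 2 * lam * s)) • (aᵀ * N) := by
      have h3 : (1 / lam + 2 * s) • v = aᵀ * N := by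
        rw [h2'] at hAX
        linear_combination (norm := module) hAX
      have h4 := congrArg (fun M => (lam / (1 + 2 * lam * s)) • M) h3
      simp only [smul_smul] at h4
      rw [show lam / (1 + 2 * lam * s) * (1 / lam + 2 * s) = 1 by
        rw [div_mul_eq_mul_div, div_eq_one_iff_eq hden, mul_add, mul_one_div_cancel hlam]; ring, one_smul] at h4
      exact h4
    refine ⟨hv, ?_⟩
    rw [hX, hv]
    simp only [Matrix.mul_smul, smul_smul, Matrix.mul_assoc]
    match_scalars <;> ring
  · rintro ⟨hv, hX⟩
    subst hv hX
    have hd1 : D * (D⁻¹ * (a * (aᵀ * N))) = a * (aᵀ * N) := by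
      rw [← Matrix.mul_assoc, hDi', Matrix.one_mul]
    constructor
    · simp only [Matrix.mul_sub, Matrix.mul_smul, Matrix.mul_assoc, hd1,
        smul_sub, smul_smul]
      match_scalars <;> ring
    · simp only [Matrix.mul_sub, Matrix.mul_smul, Matrix.mul_assoc, key',
        smul_smul]
      match_scalars
      field_simp
      ring
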